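/- arXiv:2004.08847 — 2 statements merged into one kernel-verified Lean document; each statement's English description precedes it below -/
import Mathlib

section
/- Let OPT^i_{[i,j]} denote the minimum weight of a sink tree rooted at p_i on the point set P_{[i,j]} = {p_i < ... < p_j} on a line, with edge weights w(p,q) = |{z ∈ P_{[i,j]} \ {p} : |p−z| ≤ |p−q|}| (and symmetrically OPT^j_{[i,j]} for root p_j). Then for i < j, OPT^i_{[i,j]} = min over i ≤ k < j of (OPT^i_{[i,k]} + w(p_j, p_k) + OPT^j_{[k+1,j]}), and OPT^i_{[i,i]} = 0. (Here the weights inside subproblems are computed with respect to the full set P_{[i,j]}.) -/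
/-- Edge weight on the line: `w(p_a, p_b)` computed with respect to the point set
`P_{[lo,hi]} = {p_lo, …, p_hi}`. -/
noncomputable def lineWeight (p : ℕ → ℝ) (lo hi a b : ℕ) : ℕ :=
  ((Finset.Icc lo hi).filter (fun z => z ≠ a ∧ |p a - p z| ≤ |p a - p b|)).card

/-- `par` encodes a spanning sink tree rooted at `p_x` on the vertex set `P_{[a,b]}`. -/
def IsSinkTreeOn (a b x : ℕ) (par : ℕ → ℕ) : Prop :=
  par x = x ∧ (∀ k ∈ Finset.Icc a b, k ≠ x → par k ∈ Finset.Icc a b ∧ par k ≠ k) ∧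
    ∀ k ∈ Finset.Icc a b, ∃ m : ℕ, par^[m] k = x

/-- Total weight of the sink tree encoded by `par` on vertex set `P_{[a,b]}`, with edge
weights computed with respect to the ambient point set `P_{[lo,hi]}`. -/
noncomputable def sinkTreeWeight (p : ℕ → ℝ) (lo hi a b x : ℕ) (par : ℕ → ℕ) : ℕ :=
  ∑ k ∈ (Finset.Icc a b).erase x, lineWeight p lo hi k (par k)

/-- `OPT^x_{[a,b]}`: minimum weight of a sink tree rooted at `p_x` on the vertex set
`P_{[a,b]}`, edge weights w.r.t. the ambient set `P_{[lo,hi]}`. -/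
noncomputable def OPTsink (p : ℕ → ℝ) (lo hi a b x : ℕ) : ℕ :=
  sInf {W : ℕ | ∃ par : ℕ → ℕ, IsSinkTreeOn a b x par ∧ W = sinkTreeWeight p lo hi a b x par}

namespace OPTsinkAux

/-! ### Generic lemmas about iteration/reachability -/

lemma reach_trans {f : ℕ → ℕ} {x y z : ℕ} (h1 : ∃ t, f^[t] x = y) (h2 : ∃ t, f^[t] y = z) :
    ∃ t, f^[t] x = z := by
  obtain ⟨t1, h1⟩ := h1; obtain ⟨t2, h2⟩ := h2
  exact ⟨t2 + t1, by rw [Function.iterate_add_apply, h1, h2]⟩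

lemma reach_antisymm {f : ℕ → ℕ} {i x y : ℕ} (hroot : f i = i)
    (hx : ∃ m, f^[m] x = i) (hxy : ∃ t, f^[t] x = y) (hyx : ∃ t, f^[t] y = x) : x = y := by
  obtain ⟨t1, h1⟩ := hxy; obtain ⟨t2, h2⟩ := hyx; obtain ⟨m, hm⟩ := hx
  rcases Nat.eq_zero_or_pos (t2 + t1) with h0 | hpos
  · have ht1 : t1 = 0 := by omega
    rw [ht1] at h1; simpa using h1
  · have hcyc : f^[t2 + t1] x = x := by rw [Function.iterate_add_apply, h1, h2]
    have hq : f^[(t2 + t1) * m] x = x := by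
      rw [Function.iterate_mul]; exact Function.iterate_fixed hcyc m
    have hge : m ≤ (t2 + t1) * m := Nat.le_mul_of_pos_left m hpos
    have h2' : f^[(t2 + t1) * m] x = i := by
      have := Function.iterate_add_apply f ((t2 + t1) * m - m) m x
      rw [hm, Nat.sub_add_cancel hge] at this
      rw [this, Function.iterate_fixed hroot]
    have hxi : x = i := hq.symm.trans h2'
    have hyi : y = i := by rw [← h1, hxi, Function.iterate_fixed hroot]
    rw [hxi, hyi]

/-- Follow an `f`-path to `t` inside an invariant set where `g` agrees with `f`. -/
lemma follow {S : Set ℕ} {f g : ℕ → ℕ} {t : ℕ}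
    (h : ∀ u ∈ S, u ≠ t → g u = f u ∧ f u ∈ S) :
    ∀ m : ℕ, ∀ v ∈ S, f^[m] v = t → ∃ m', g^[m'] v = t := by
  intro m
  induction m with
  | zero => intro v _ hv; exact ⟨0, hv⟩
  | succ m ih =>
    intro v hv hit
    by_cases hvt : v = t
    · exact ⟨0, hvt⟩
    · obtain ⟨he, hmem⟩ := h v hv hvt
      rw [Function.iterate_succ_apply] at hit
      obtain ⟨m', hm'⟩ := ih (f v) hmem hit
      exact ⟨m' + 1, by rw [Function.iterate_succ_apply, he, hm']⟩

/-- If `g` agrees with `f` everywhere except possibly at `a`, and `a` reaches `i` via `g`,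
then anything reaching `i` via `f` reaches `i` via `g`. -/
lemma reroute {f g : ℕ → ℕ} {a i : ℕ} (hg : ∀ u, u ≠ a → g u = f u)
    (ha : ∃ m, g^[m] a = i) :
    ∀ m v, f^[m] v = i → ∃ m', g^[m'] v = i := by
  intro m
  induction m with
  | zero => intro v hv; exact ⟨0, hv⟩
  | succ m ih =>
    intro v hv
    by_cases hva : v = a
    · rw [hva]; exact ha
    · rw [Function.iterate_succ_apply] at hv
      obtain ⟨m', hm'⟩ := ih (f v) hv
      exact ⟨m' + 1, by rw [Function.iterate_succ_apply, hg v hva, hm']⟩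

/-! ### Basic lemmas about `lineWeight` / `OPTsink` -/

lemma lineWeight_mono {p : ℕ → ℝ} {lo hi a b c : ℕ} (h : |p a - p c| ≤ |p a - p b|) :
    lineWeight p lo hi a c ≤ lineWeight p lo hi a b := by
  apply Finset.card_le_card
  intro z hz
  simp only [Finset.mem_filter] at hz ⊢
  exact ⟨hz.1, hz.2.1, hz.2.2.trans h⟩

lemma abs_lt_of_between {p : ℕ → ℝ} (hp : StrictMono p) {a u c : ℕ}
    (h1 : min a u < c) (h2 : c < max a u) : |p a - p c| < |p a - p u| := by
  rcases Nat.lt_trichotomy a u with hau | hau | hau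
  · have hac : a < c := by omega
    have hcu : c < u := by omega
    have h3 : p a < p c := hp hac
    have h4 : p c < p u := hp hcu
    rw [abs_of_nonpos (by linarith), abs_of_nonpos (by linarith)]
    linarith
  · omega
  · have hca : c < a := by omega
    have huc : u < c := by omega
    have h3 : p c < p a := hp hca
    have h4 : p u < p c := hp huc
    rw [abs_of_nonneg (by linarith), abs_of_nonneg (by linarith)]
    linarith

lemma star_tree {a b x : ℕ} (hx : x ∈ Finset.Icc a b) :
    IsSinkTreeOn a b x (fun _ => x) := by
  refine ⟨rfl, fun k _ hkx => ⟨hx, fun h => hkx h.symm⟩, fun k _ => ⟨1, rfl⟩⟩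

lemma set_nonempty (p : ℕ → ℝ) {lo hi a b x : ℕ} (hx : x ∈ Finset.Icc a b) :
    {W : ℕ | ∃ par : ℕ → ℕ, IsSinkTreeOn a b x par ∧
      W = sinkTreeWeight p lo hi a b x par}.Nonempty :=
  ⟨_, fun _ => x, star_tree hx, rfl⟩

lemma OPT_spec (p : ℕ → ℝ) {lo hi a b x : ℕ} (hx : x ∈ Finset.Icc a b) :
    ∃ par : ℕ → ℕ, IsSinkTreeOn a b x par ∧
      OPTsink p lo hi a b x = sinkTreeWeight p lo hi a b x par :=
  Nat.sInf_mem (set_nonempty p hx)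

lemma OPT_le (p : ℕ → ℝ) {lo hi a b x : ℕ} {par : ℕ → ℕ} (h : IsSinkTreeOn a b x par) :
    OPTsink p lo hi a b x ≤ sinkTreeWeight p lo hi a b x par :=
  Nat.sInf_le ⟨par, h, rfl⟩

lemma OPT_base (p : ℕ → ℝ) (lo hi a : ℕ) : OPTsink p lo hi a a a = 0 := by
  have h := OPT_le p (lo := lo) (hi := hi) (star_tree (a := a) (b := a) (x := a) (by simp))
  have : sinkTreeWeight p lo hi a a a (fun _ => a) = 0 := by
    simp [sinkTreeWeight]
  omega

lemma sum_split {i j k : ℕ} (hik : i ≤ k) (hkj : k < j) (F : ℕ → ℕ) :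
    ∑ v ∈ (Finset.Icc i j).erase i, F v
      = (∑ v ∈ (Finset.Icc i k).erase i, F v) + F j
        + ∑ v ∈ (Finset.Icc (k + 1) j).erase j, F v := by
  have hdis : Disjoint ((Finset.Icc i k).erase i) (Finset.Icc (k + 1) j) := by
    rw [Finset.disjoint_left]
    intro z hz1 hz2
    simp only [Finset.mem_erase, Finset.mem_Icc] at hz1 hz2
    omega
  have hun : (Finset.Icc i j).erase i = ((Finset.Icc i k).erase i) ∪ Finset.Icc (k + 1) j := by
    ext z
    simp only [Finset.mem_erase, Finset.mem_Icc, Finset.mem_union]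
    omega
  rw [hun, Finset.sum_union hdis]
  have hj : j ∈ Finset.Icc (k + 1) j := by simp [Finset.mem_Icc]; omega
  rw [← Finset.add_sum_erase _ F hj]
  ring

/-! ### The easy direction: combining two subtrees -/

lemma le_combine (p : ℕ → ℝ) {i j k : ℕ} (hik : i ≤ k) (hkj : k < j) :
    OPTsink p i j i j i
      ≤ OPTsink p i j i k i + lineWeight p i j j k + OPTsink p i j (k + 1) j j := by
  obtain ⟨par1, ht1, hw1⟩ := OPT_spec p (lo := i) (hi := j) (a := i) (b := k) (x := i)
    (by simp [Finset.mem_Icc]; omega)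
  obtain ⟨par2, ht2, hw2⟩ := OPT_spec p (lo := i) (hi := j) (a := k + 1) (b := j) (x := j)
    (by simp [Finset.mem_Icc]; omega)
  set comb : ℕ → ℕ := fun v => if v ≤ k then par1 v else if v = j then k else par2 v with hcomb
  have hcomb_left : ∀ v, v ≤ k → comb v = par1 v := by
    intro v hv; simp [hcomb, hv]
  have hcomb_mid : ∀ v, k < v → v ≠ j → comb v = par2 v := by
    intro v hv hvj; simp [hcomb, Nat.not_le.mpr hv, hvj]
  have hcomb_j : comb j = k := by
    simp [hcomb, Nat.not_le.mpr hkj]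
  -- reachability of i from the left block
  have hleft : ∀ v ∈ Finset.Icc i k, ∃ m, comb^[m] v = i := by
    intro v hv
    obtain ⟨m, hm⟩ := ht1.2.2 v hv
    refine follow (S := {u | u ∈ Finset.Icc i k}) ?_ m v hv hm
    intro u hu hui
    refine ⟨hcomb_left u (by simp only [Set.mem_setOf_eq, Finset.mem_Icc] at hu; omega), ?_⟩
    exact (ht1.2.1 u hu hui).1
  have htree : IsSinkTreeOn i j i comb := by
    refine ⟨?_, ?_, ?_⟩
    · rw [hcomb_left i hik]; exact ht1.1
    · intro v hv hvi
      simp only [Finset.mem_Icc] at hv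
      by_cases hvk : v ≤ k
      · rw [hcomb_left v hvk]
        have h := ht1.2.1 v (by simp [Finset.mem_Icc]; omega) hvi
        simp only [Finset.mem_Icc] at h ⊢
        refine ⟨⟨h.1.1, by omega⟩, h.2⟩
      · by_cases hvj : v = j
        · rw [hvj, hcomb_j]
          simp only [Finset.mem_Icc]
          exact ⟨⟨hik, le_of_lt hkj⟩, by omega⟩
        · rw [hcomb_mid v (by omega) hvj]
          have h := ht2.2.1 v (by simp [Finset.mem_Icc]; omega) hvj
          simp only [Finset.mem_Icc] at h ⊢
          refine ⟨⟨by omega, h.1.2⟩, h.2⟩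
    · intro v hv
      simp only [Finset.mem_Icc] at hv
      by_cases hvk : v ≤ k
      · exact hleft v (by simp [Finset.mem_Icc]; omega)
      · -- first reach j, then k, then i
        have hvj2 : v ∈ Finset.Icc (k + 1) j := by simp [Finset.mem_Icc]; omega
        obtain ⟨m, hm⟩ := ht2.2.2 v hvj2
        have hfol : ∃ m', comb^[m'] v = j := by
          refine follow (S := {u | u ∈ Finset.Icc (k + 1) j}) ?_ m v hvj2 hm
          intro u hu huj
          simp only [Set.mem_setOf_eq] at hu
          refine ⟨hcomb_mid u (by simp only [Finset.mem_Icc] at hu; omega) huj, ?_⟩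
          exact (ht2.2.1 u hu huj).1
        obtain ⟨m', hm'⟩ := hfol
        obtain ⟨m'', hm''⟩ := hleft k (by simp [Finset.mem_Icc]; omega)
        refine ⟨m'' + 1 + m', ?_⟩
        rw [Function.iterate_add_apply, hm', Function.iterate_add_apply]
        simp only [Function.iterate_one, hcomb_j]
        exact hm''
  have hle := OPT_le p (lo := i) (hi := j) htree
  refine hle.trans (le_of_eq ?_)
  rw [hw1, hw2]
  unfold sinkTreeWeight
  rw [sum_split hik hkj (fun v => lineWeight p i j v (comb v))]
  congr 1
  · congr 1
    · apply Finset.sum_congr rfl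
      intro v hv
      simp only [Finset.mem_erase, Finset.mem_Icc] at hv
      rw [hcomb_left v hv.2.2]
    · rw [hcomb_j]
  · apply Finset.sum_congr rfl
    intro v hv
    simp only [Finset.mem_erase, Finset.mem_Icc] at hv
    rw [hcomb_mid v (by omega) hv.1]

/-! ### The hard direction: an optimal tree can be split -/

lemma exists_split (p : ℕ → ℝ) (hp : StrictMono p) {i j : ℕ} (hij : i < j) :
    ∃ k, (i ≤ k ∧ k < j) ∧
      OPTsink p i j i k i + lineWeight p i j j k + OPTsink p i j (k + 1) j j
        ≤ OPTsink p i j i j i := by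
  have hiIcc : i ∈ Finset.Icc i j := by simp [Finset.mem_Icc]; omega
  have hjIcc : j ∈ Finset.Icc i j := by simp [Finset.mem_Icc]; omega
  set W0 := OPTsink p i j i j i with hW0
  -- measure: total index-length of the tree
  set msum : (ℕ → ℕ) → ℕ :=
    fun f => ∑ v ∈ (Finset.Icc i j).erase i, (max v (f v) - min v (f v)) with hmsum
  set B : Set ℕ := {L | ∃ par : ℕ → ℕ, IsSinkTreeOn i j i par ∧
    sinkTreeWeight p i j i j i par = W0 ∧ L = msum par} with hB
  have hBne : B.Nonempty := by
    obtain ⟨par0, ht0, hw0⟩ := OPT_spec p (lo := i) (hi := j) (a := i) (b := j) (x := i) hiIcc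
    exact ⟨msum par0, par0, ht0, hw0.symm, rfl⟩
  obtain ⟨par, htree, hw, hl⟩ := Nat.sInf_mem hBne
  -- Property P: every vertex strictly between an edge's endpoints is a descendant
  have P : ∀ a ∈ Finset.Icc i j, a ≠ i →
      ∀ c, min a (par a) < c → c < max a (par a) → ∃ t, par^[t] c = a := by
    intro a ha hai c hc1 hc2
    by_contra hnr
    push_neg at hnr
    obtain ⟨hpmem, hpne⟩ := htree.2.1 a ha hai
    simp only [Finset.mem_Icc] at ha hpmem
    have hca : c ≠ a := by omega
    have hcmem : c ∈ Finset.Icc i j := by simp only [Finset.mem_Icc]; omega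
    set par' := Function.update par a c with hpar'
    have hpar'_ne : ∀ u, u ≠ a → par' u = par u := fun u hu =>
      Function.update_of_ne hu c par
    have hpar'_a : par' a = c := Function.update_self a c par
    have htree' : IsSinkTreeOn i j i par' := by
      refine ⟨?_, ?_, ?_⟩
      · rw [hpar'_ne i (Ne.symm hai)]; exact htree.1
      · intro v hv hvi
        by_cases hva : v = a
        · rw [hva, hpar'_a]
          exact ⟨hcmem, hca⟩
        · rw [hpar'_ne v hva]
          exact htree.2.1 v hv hvi
      · -- reachability
        have hS : ∀ u ∈ {u : ℕ | ∀ t, par^[t] u ≠ a}, u ≠ i →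
            par' u = par u ∧ par u ∈ {u : ℕ | ∀ t, par^[t] u ≠ a} := by
          intro u hu _
          simp only [Set.mem_setOf_eq] at hu ⊢
          refine ⟨hpar'_ne u (hu 0), fun t ht => hu (t + 1) ?_⟩
          rw [Function.iterate_succ_apply]; exact ht
        obtain ⟨m, hm⟩ := htree.2.2 c hcmem
        obtain ⟨m', hm'⟩ := follow hS m c hnr hm
        have hreach_a : ∃ m, par'^[m] a = i :=
          ⟨m' + 1, by rw [Function.iterate_succ_apply, hpar'_a]; exact hm'⟩
        intro v hv
        obtain ⟨mv, hmv⟩ := htree.2.2 v hv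
        exact reroute hpar'_ne hreach_a mv v hmv
    -- weight does not increase
    have habs := abs_lt_of_between hp (a := a) (u := par a) (c := c) hc1 hc2
    have hwle : sinkTreeWeight p i j i j i par' ≤ sinkTreeWeight p i j i j i par := by
      apply Finset.sum_le_sum
      intro v hv
      by_cases hva : v = a
      · rw [hva, hpar'_a]
        exact lineWeight_mono (le_of_lt habs)
      · rw [hpar'_ne v hva]
    have hwge : W0 ≤ sinkTreeWeight p i j i j i par' := OPT_le p htree'
    have hweq : sinkTreeWeight p i j i j i par' = W0 := by omega
    -- measure strictly decreases
    have hmlt : msum par' < msum par := by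
      apply Finset.sum_lt_sum
      · intro v hv
        by_cases hva : v = a
        · rw [hva, hpar'_a]; omega
        · rw [hpar'_ne v hva]
      · refine ⟨a, by simp only [Finset.mem_erase]; exact ⟨hai, by simp [Finset.mem_Icc]; omega⟩, ?_⟩
        rw [hpar'_a]; omega
    have hle' : sInf B ≤ msum par' := Nat.sInf_le ⟨par', htree', hweq, rfl⟩
    omega
  -- now extract the split point
  set k := par j with hk
  obtain ⟨hkmem, hkne⟩ := htree.2.1 j hjIcc (by omega)
  simp only [Finset.mem_Icc] at hkmem
  have hkj : k < j := by omega
  have hji : j ≠ i := by omega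
  have F1 : ∀ v, k < v → v < j → ∃ t, par^[t] v = j := by
    intro v hv1 hv2
    have := P j hjIcc hji v
    rw [← hk, Nat.min_eq_right (le_of_lt hkj), Nat.max_eq_left (le_of_lt hkj)] at this
    exact this hv1 hv2
  have hreachjk : ∃ t, par^[t] j = k := ⟨1, by rw [Function.iterate_one, ← hk]⟩
  -- left side is closed
  have splitL : ∀ v, i ≤ v → v ≤ k → v ≠ i → par v ≤ k := by
    intro v hv1 hv2 hvi
    by_contra hu
    push_neg at hu
    set u := par v with hu_def
    have hvmem : v ∈ Finset.Icc i j := by simp [Finset.mem_Icc]; omega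
    obtain ⟨humem, hune⟩ := htree.2.1 v hvmem hvi
    simp only [Finset.mem_Icc] at humem
    have hreach_vj : ∃ t, par^[t] v = j := by
      by_cases huj : u = j
      · exact ⟨1, by rw [Function.iterate_one, ← hu_def, huj]⟩
      · exact reach_trans ⟨1, by rw [Function.iterate_one]⟩ (F1 u hu (by omega))
    have hreach_jv : ∃ t, par^[t] j = v := by
      by_cases hvk : v = k
      · exact ⟨1, by rw [Function.iterate_one, ← hk, hvk]⟩
      · -- v < k, k strictly between v and u = par v
        have hPk := P v hvmem hvi k
        rw [← hu_def, Nat.min_eq_left (by omega), Nat.max_eq_right (by omega)] at hPk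
        exact reach_trans hreachjk (hPk (by omega) hu)
    have := reach_antisymm htree.1 (htree.2.2 v hvmem) hreach_vj hreach_jv
    omega
  -- right side is closed
  have splitR : ∀ v, k < v → v ≤ j → v ≠ j → k < par v := by
    intro v hv1 hv2 hvj
    by_contra hu
    push_neg at hu
    set u := par v with hu_def
    have hvmem : v ∈ Finset.Icc i j := by simp [Finset.mem_Icc]; omega
    have hvi : v ≠ i := by omega
    obtain ⟨humem, hune⟩ := htree.2.1 v hvmem hvi
    simp only [Finset.mem_Icc] at humem
    have hreach_vj : ∃ t, par^[t] v = j := F1 v hv1 (by omega)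
    by_cases huk : u = k
    · -- v → k; from v reaching j deduce k reaches j; with j → k a cycle
      obtain ⟨t, ht⟩ := hreach_vj
      have ht0 : t ≠ 0 := by
        intro h0; rw [h0] at ht; simp at ht; omega
      obtain ⟨t', rfl⟩ := Nat.exists_eq_succ_of_ne_zero ht0
      rw [Function.iterate_succ_apply, ← hu_def, huk] at ht
      have hkmem' : k ∈ Finset.Icc i j := by simp [Finset.mem_Icc]; omega
      have := reach_antisymm htree.1 (htree.2.2 k hkmem') ⟨t', ht⟩ hreachjk
      omega
    · -- u < k, k strictly between u and v
      have hPk := P v hvmem hvi k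
      rw [← hu_def, Nat.min_eq_right (by omega), Nat.max_eq_left (by omega)] at hPk
      have hreach_kv := hPk (by omega) (by omega)
      have hreach_jv := reach_trans hreachjk hreach_kv
      have := reach_antisymm htree.1 (htree.2.2 v hvmem) hreach_vj hreach_jv
      omega
  -- left subtree: par itself
  have htreeL : IsSinkTreeOn i k i par := by
    refine ⟨htree.1, ?_, ?_⟩
    · intro v hv hvi
      simp only [Finset.mem_Icc] at hv
      have h := htree.2.1 v (by simp [Finset.mem_Icc]; omega) hvi
      simp only [Finset.mem_Icc] at h ⊢
      exact ⟨⟨h.1.1, splitL v hv.1 hv.2 hvi⟩, h.2⟩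
    · intro v hv
      simp only [Finset.mem_Icc] at hv
      exact htree.2.2 v (by simp [Finset.mem_Icc]; omega)
  -- right subtree: par updated at j
  set par2 := Function.update par j j with hpar2
  have hpar2_ne : ∀ u, u ≠ j → par2 u = par u := fun u hu => Function.update_of_ne hu j par
  have htreeR : IsSinkTreeOn (k + 1) j j par2 := by
    refine ⟨Function.update_self j j par, ?_, ?_⟩
    · intro v hv hvj
      simp only [Finset.mem_Icc] at hv
      rw [hpar2_ne v hvj]
      have h := htree.2.1 v (by simp [Finset.mem_Icc]; omega) (by omega)
      simp only [Finset.mem_Icc] at h ⊢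
      exact ⟨⟨splitR v (by omega) hv.2 hvj, h.1.2⟩, h.2⟩
    · intro v hv
      by_cases hvj : v = j
      · exact ⟨0, hvj⟩
      · simp only [Finset.mem_Icc] at hv
        obtain ⟨m, hm⟩ := F1 v (by omega) (by omega)
        refine follow (S := {u : ℕ | k + 1 ≤ u ∧ u ≤ j}) ?_ m v ⟨hv.1, hv.2⟩ hm
        intro u hu huj
        simp only [Set.mem_setOf_eq] at hu ⊢
        have h := (htree.2.1 u (by simp [Finset.mem_Icc]; omega) (by omega)).1
        simp only [Finset.mem_Icc] at h
        exact ⟨hpar2_ne u huj, splitR u (by omega) hu.2 huj, h.2⟩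
  -- assemble the inequality
  refine ⟨k, ⟨hkmem.1, hkj⟩, ?_⟩
  have hleL : OPTsink p i j i k i ≤ ∑ v ∈ (Finset.Icc i k).erase i, lineWeight p i j v (par v) :=
    OPT_le p htreeL
  have hleR : OPTsink p i j (k + 1) j j
      ≤ ∑ v ∈ (Finset.Icc (k + 1) j).erase j, lineWeight p i j v (par v) := by
    have h := OPT_le p (lo := i) (hi := j) htreeR
    refine h.trans (le_of_eq ?_)
    apply Finset.sum_congr rfl
    intro v hv
    simp only [Finset.mem_erase] at hv
    rw [hpar2_ne v hv.1]
  have hdecomp : W0 = (∑ v ∈ (Finset.Icc i k).erase i, lineWeight p i j v (par v))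
      + lineWeight p i j j k
      + ∑ v ∈ (Finset.Icc (k + 1) j).erase j, lineWeight p i j v (par v) := by
    rw [← hw]
    unfold sinkTreeWeight
    rw [sum_split hkmem.1 hkj (fun v => lineWeight p i j v (par v))]
  omega

end OPTsinkAux

/-- the recurrence for `OPT^i_{[i,j]}`: the base case `OPT^i_{[i,i]} = 0`
and, for `i < j`,
`OPT^i_{[i,j]} = min_{i ≤ k < j} (OPT^i_{[i,k]} + w(p_j,p_k) + OPT^j_{[k+1,j]})`,
where all weights are computed with respect to the full set `P_{[i,j]}`. -/
theorem OPTsink_recurrence (p : ℕ → ℝ) (hp : StrictMono p) (i j : ℕ) (hij : i < j) :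
    (∀ a : ℕ, OPTsink p i j a a a = 0) ∧
    OPTsink p i j i j i
      = (Finset.Ico i j).inf' (Finset.nonempty_Ico.mpr hij)
          (fun k => OPTsink p i j i k i + lineWeight p i j j k + OPTsink p i j (k + 1) j j) := by
  refine ⟨fun a => OPTsinkAux.OPT_base p i j a, ?_⟩
  apply le_antisymm
  · apply Finset.le_inf'
    intro k hk
    simp only [Finset.mem_Ico] at hk
    exact OPTsinkAux.le_combine p hk.1 hk.2
  · obtain ⟨k, hk, hle⟩ := OPTsinkAux.exists_split p hp hij
    exact le_trans (Finset.inf'_le _ (by simp [Finset.mem_Ico]; omega)) hle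
end

section
/- Let P = {p_1 < ... < p_n} be real numbers and consider intervals [i,j] with i ≤ j. Define the values S←[i,j] and S→[i,j] by the recurrences S←[i,i] = S→[i,i] = 0, S←[i,j] = min_{i ≤ k < j} (S←[i,k] + w(p_j,p_k) + S→[k+1,j]) and S→[i,j] = min_{i < k ≤ j} (S←[i,k−1] + w(p_i,p_k) + S→[k,j]), where w is computed over all of P. Then S←[i,j] ≤ OPT^i_{[i,j]} and S→[i,j] ≤ OPT^j_{[i,j]}: each recurrence value is achieved by the weight of some sink tree on P_{[i,j]} rooted at p_i (resp. p_j). -/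
lemma dist_between (p : ℕ → ℝ) (hp : StrictMono p) {a b c : ℕ}
    (h : (a ≤ c ∧ c ≤ b) ∨ (b ≤ c ∧ c ≤ a)) :
    |p a - p c| ≤ |p a - p b| := by
  rcases h with ⟨h1, h2⟩ | ⟨h1, h2⟩
  · have m1 := hp.monotone h1; have m2 := hp.monotone h2
    rw [abs_of_nonpos (by linarith), abs_of_nonpos (by linarith)]; linarith
  · have m1 := hp.monotone h1; have m2 := hp.monotone h2
    rw [abs_of_nonneg (by linarith), abs_of_nonneg (by linarith)]; linarith

lemma lineWeight_between (p : ℕ → ℝ) (hp : StrictMono p) (lo hi : ℕ) {a b c : ℕ}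
    (h : (a ≤ c ∧ c ≤ b) ∨ (b ≤ c ∧ c ≤ a)) :
    lineWeight p lo hi a c ≤ lineWeight p lo hi a b := by
  apply Finset.card_le_card
  intro z hz
  simp only [Finset.mem_filter] at hz ⊢
  exact ⟨hz.1, hz.2.1, hz.2.2.trans (dist_between p hp h)⟩

lemma reach_transfer (f g : ℕ → ℕ) (S Q : ℕ → Prop) (x y : ℕ)
    (hS : ∀ u, S u → ¬ Q u → S (f u))
    (hagree : ∀ u, S u → ¬ Q u → g u = f u)
    (hQ : ∀ u, Q u → ∃ m, g^[m] u = y)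
    (hx : ∃ m, g^[m] x = y) :
    ∀ m v, S v → f^[m] v = x → ∃ m', g^[m'] v = y := by
  intro m
  induction m with
  | zero =>
    intro v hv h
    by_cases hq : Q v
    · exact hQ v hq
    · simp only [Function.iterate_zero, id] at h; subst h; exact hx
  | succ m ih =>
    intro v hv h
    by_cases hq : Q v
    · exact hQ v hq
    · rw [Function.iterate_succ_apply] at h
      obtain ⟨m', hm'⟩ := ih (f v) (hS v hv hq) h
      exact ⟨m' + 1, by rw [Function.iterate_succ_apply, hagree v hv hq, hm']⟩

lemma reach_of_periodic {f : ℕ → ℕ} {v x : ℕ} (hx : f x = x)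
    {a b : ℕ} (ha : 0 < a) (hper : f^[a] v = v) (hreach : f^[b] v = x) :
    v = x := by
  have hmul : ∀ c, f^[c * a] v = v := by
    intro c
    induction c with
    | zero => simp
    | succ c ih => rw [Nat.succ_mul, Function.iterate_add_apply, hper, ih]
  have h2 : f^[b * a] v = x := by
    have he : b * a - b + b = b * a := by
      have := Nat.le_mul_of_pos_right b ha; omega
    rw [← he, Function.iterate_add_apply, hreach, Function.iterate_fixed hx]
  rw [hmul b] at h2
  exact h2

lemma reach_from_orbit {f : ℕ → ℕ} {x v : ℕ} (hx : f x = x) {M : ℕ}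
    (h : f^[M] v = x) (r : ℕ) : ∃ m, f^[m] (f^[r] v) = x := by
  rcases le_or_gt r M with hr | hr
  · exact ⟨M - r, by rw [← Function.iterate_add_apply, Nat.sub_add_cancel hr, h]⟩
  · refine ⟨0, ?_⟩
    have he : r - M + M = r := by omega
    simp only [Function.iterate_zero, id]
    rw [← he, Function.iterate_add_apply, h, Function.iterate_fixed hx]

/-- no positive power of `par` returns the root-side vertex `z` to itself, when `z`
reaches a fixpoint `x ≠ z`. -/
lemma no_period {par : ℕ → ℕ} {z x : ℕ} (hx : par x = x) (hzx : z ≠ x)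
    {M : ℕ} (hM : par^[M] z = x) : ∀ r, par^[r+1] z ≠ z := by
  intro r h
  exact hzx (reach_of_periodic hx (Nat.succ_pos r) h hM)

/-- Exchange lemma, left version: any sink tree rooted at `i` can be transformed,
without increasing the weight, into one where `(par j, j)` is upward closed. -/
lemma exchangeL (n : ℕ) (p : ℕ → ℝ) (hp : StrictMono p) :
    ∀ t {i j : ℕ} (par : ℕ → ℕ), i < j → IsSinkTreeOn i j i par → j ≤ par j + t →
    ∃ q, IsSinkTreeOn i j i q ∧
      sinkTreeWeight p 1 n i j i q ≤ sinkTreeWeight p 1 n i j i par ∧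
      ∀ w, q j < w → w < j → q j < q w := by
  intro t
  induction t with
  | zero =>
    intro i j par hij st hle
    exfalso
    have hj := st.2.1 j (by simp [Finset.mem_Icc]; omega) (by omega)
    simp only [Finset.mem_Icc] at hj
    omega
  | succ t ih =>
    intro i j par hij st hle
    have hjmem : j ∈ Finset.Icc i j := by simp [Finset.mem_Icc]; omega
    have hj := st.2.1 j hjmem (by omega)
    simp only [Finset.mem_Icc] at hj
    set k := par j with hk
    have hik : i ≤ k := hj.1.1
    have hkj : k < j := by omega
    by_cases hb : ∀ w, k < w → w < j → k < par w
    · exact ⟨par, st, le_refl _, hb⟩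
    push_neg at hb
    obtain ⟨w, hkw, hwj, hwk⟩ := hb
    have hwmem : w ∈ Finset.Icc i j := by simp [Finset.mem_Icc]; omega
    have hwi : w ≠ i := by omega
    have hfixi : par i = i := st.1
    have hreach := st.2.2
    obtain ⟨Mj, hMj⟩ := hreach j hjmem
    have hjno : ∀ r, par^[r+1] j ≠ j := no_period hfixi (by omega) hMj
    -- orbit of k avoids j
    have hkno : ∀ r, par^[r] k ≠ j := by
      intro r h
      exact hjno r (by rw [Function.iterate_succ_apply, ← hk, h])
    obtain ⟨Mk, hMk⟩ := reach_from_orbit hfixi hMj 1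
    rw [Function.iterate_one, ← hk] at hMk
    by_cases hA : ∃ s, par^[s] k = w
    · -- Case A : w lies on the orbit of k; reroute j to w.
      set q : ℕ → ℕ := fun v => if v = j then w else par v with hq
      have hqj : q j = w := by simp [hq]
      have hqe : ∀ u, u ≠ j → q u = par u := by
        intro u hu; simp [hq, hu]
      -- w's orbit avoids j
      obtain ⟨s, hs⟩ := hA
      have hwno : ∀ r, par^[r] w ≠ j := by
        intro r h
        apply hkno (r + s)
        rw [Function.iterate_add_apply, hs, h]
      obtain ⟨Mw, hMw⟩ := reach_from_orbit hfixi hMk s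
      rw [hs] at hMw
      -- w reaches i under q
      have hwreach : ∃ m, q^[m] w = i := by
        refine reach_transfer par q (fun u => ∃ r, par^[r] w = u) (fun _ => False) i i
          ?_ ?_ (fun u h => h.elim) ⟨0, rfl⟩ Mw w ⟨0, rfl⟩ hMw
        · rintro u ⟨r, hr⟩ _
          exact ⟨r + 1, by rw [Function.iterate_succ_apply', hr]⟩
        · rintro u ⟨r, hr⟩ _
          exact hqe u (by rw [← hr]; exact hwno r)
      have hqreach : ∀ v ∈ Finset.Icc i j, ∃ m, q^[m] v = i := by
        intro v hv
        obtain ⟨M, hM⟩ := hreach v hv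
        refine reach_transfer par q (fun _ => True) (fun u => u = j) i i
          (fun _ _ _ => trivial) (fun u _ hu => hqe u hu) ?_ ⟨0, rfl⟩ M v trivial hM
        intro u hu
        subst hu
        obtain ⟨m, hm⟩ := hwreach
        exact ⟨m + 1, by rw [Function.iterate_succ_apply, hqj, hm]⟩
      have hst : IsSinkTreeOn i j i q := by
        refine ⟨by rw [hqe i (by omega), hfixi], ?_, hqreach⟩
        intro v hv hvi
        by_cases hvj : v = j
        · subst hvj
          rw [hqj]
          exact ⟨hwmem, by omega⟩
        · rw [hqe v hvj]; exact st.2.1 v hv hvi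
      have hwt : sinkTreeWeight p 1 n i j i q ≤ sinkTreeWeight p 1 n i j i par := by
        apply Finset.sum_le_sum
        intro v hv
        by_cases hvj : v = j
        · subst hvj
          rw [hqj]
          exact lineWeight_between p hp 1 n (Or.inr ⟨by omega, by omega⟩)
        · rw [hqe v hvj]
      obtain ⟨q', hst', hwt', hnorm'⟩ := ih q hij hst (by rw [hqj]; omega)
      exact ⟨q', hst', hwt'.trans hwt, hnorm'⟩
    · -- Case B : w not on orbit of k; reroute j to w and w to k.
      push_neg at hA
      set q : ℕ → ℕ := fun v => if v = j then w else if v = w then k else par v with hq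
      have hqj : q j = w := by simp [hq]
      have hqw : q w = k := by simp [hq, show w ≠ j by omega]
      have hqe : ∀ u, u ≠ j → u ≠ w → q u = par u := by
        intro u h1 h2; simp [hq, h1, h2]
      -- k reaches i under q (its orbit avoids j and w)
      have hkreach : ∃ m, q^[m] k = i := by
        refine reach_transfer par q (fun u => ∃ r, par^[r] k = u) (fun _ => False) i i
          ?_ ?_ (fun u h => h.elim) ⟨0, rfl⟩ Mk k ⟨0, rfl⟩ hMk
        · rintro u ⟨r, hr⟩ _
          exact ⟨r + 1, by rw [Function.iterate_succ_apply', hr]⟩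
        · rintro u ⟨r, hr⟩ _
          exact hqe u (by rw [← hr]; exact hkno r) (by rw [← hr]; exact hA r)
      have hwreach : ∃ m, q^[m] w = i := by
        obtain ⟨m, hm⟩ := hkreach
        exact ⟨m + 1, by rw [Function.iterate_succ_apply, hqw, hm]⟩
      have hqreach : ∀ v ∈ Finset.Icc i j, ∃ m, q^[m] v = i := by
        intro v hv
        obtain ⟨M, hM⟩ := hreach v hv
        refine reach_transfer par q (fun _ => True) (fun u => u = j ∨ u = w) i i
          (fun _ _ _ => trivial) (fun u _ hu => hqe u (by tauto) (by tauto)) ?_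
          ⟨0, rfl⟩ M v trivial hM
        rintro u (hu | hu) <;> subst hu
        · obtain ⟨m, hm⟩ := hwreach
          exact ⟨m + 1, by rw [Function.iterate_succ_apply, hqj, hm]⟩
        · exact hwreach
      have hst : IsSinkTreeOn i j i q := by
        refine ⟨by rw [hqe i (by omega) (by omega), hfixi], ?_, hqreach⟩
        intro v hv hvi
        by_cases hvj : v = j
        · subst hvj; rw [hqj]; exact ⟨hwmem, by omega⟩
        by_cases hvw : v = w
        · subst hvw
          rw [hqw]
          exact ⟨by simp [Finset.mem_Icc]; omega, by omega⟩
        · rw [hqe v hvj hvw]; exact st.2.1 v hv hvi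
      have hwt : sinkTreeWeight p 1 n i j i q ≤ sinkTreeWeight p 1 n i j i par := by
        apply Finset.sum_le_sum
        intro v hv
        by_cases hvj : v = j
        · subst hvj
          rw [hqj]
          exact lineWeight_between p hp 1 n (Or.inr ⟨by omega, by omega⟩)
        by_cases hvw : v = w
        · subst hvw
          rw [hqw]
          exact lineWeight_between p hp 1 n (Or.inr ⟨hwk, by omega⟩)
        · rw [hqe v hvj hvw]
      obtain ⟨q', hst', hwt', hnorm'⟩ := ih q hij hst (by rw [hqj]; omega)
      exact ⟨q', hst', hwt'.trans hwt, hnorm'⟩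

lemma sum_splitL (i k j : ℕ) (hik : i ≤ k) (hkj : k < j) (F : ℕ → ℕ) :
    ∑ v ∈ (Finset.Icc i j).erase i, F v
      = (∑ v ∈ (Finset.Icc i k).erase i, F v) + F j
        + ∑ v ∈ (Finset.Icc (k+1) j).erase j, F v := by
  have h1 : (Finset.Icc i j).erase i
      = ((Finset.Icc i k).erase i) ∪ (insert j ((Finset.Icc (k+1) j).erase j)) := by
    ext v
    simp only [Finset.mem_erase, Finset.mem_Icc, Finset.mem_union, Finset.mem_insert]
    omega
  have hd : Disjoint ((Finset.Icc i k).erase i) (insert j ((Finset.Icc (k+1) j).erase j)) := by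
    rw [Finset.disjoint_left]
    intro v hv hv2
    simp only [Finset.mem_erase, Finset.mem_Icc, Finset.mem_insert] at hv hv2
    omega
  have hj : j ∉ (Finset.Icc (k+1) j).erase j := by simp
  rw [h1, Finset.sum_union hd, Finset.sum_insert hj]
  omega

lemma decomposeL (n : ℕ) (p : ℕ → ℝ) (hp : StrictMono p) {i j : ℕ} (hij : i < j)
    (par : ℕ → ℕ) (st0 : IsSinkTreeOn i j i par) :
    ∃ k par1 par2, i ≤ k ∧ k < j ∧ IsSinkTreeOn i k i par1 ∧
      IsSinkTreeOn (k+1) j j par2 ∧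
      sinkTreeWeight p 1 n i k i par1 + lineWeight p 1 n j k
        + sinkTreeWeight p 1 n (k+1) j j par2 ≤ sinkTreeWeight p 1 n i j i par := by
  obtain ⟨q, st, hwq, hnorm⟩ := exchangeL n p hp j par hij st0 (by
    have hj := st0.2.1 j (by simp [Finset.mem_Icc]; omega) (by omega)
    simp only [Finset.mem_Icc] at hj; omega)
  have hjmem : j ∈ Finset.Icc i j := by simp [Finset.mem_Icc]; omega
  have hj := st.2.1 j hjmem (by omega)
  simp only [Finset.mem_Icc] at hj
  set k := q j with hk
  have hik : i ≤ k := hj.1.1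
  have hkj : k < j := by omega
  have hfixi : q i = i := st.1
  have hreach := st.2.2
  -- basic parent facts
  have hpar : ∀ v, i ≤ v → v ≤ j → i ≤ q v ∧ q v ≤ j ∧ (v ≠ i → q v ≠ v) := by
    intro v h1 h2
    by_cases hv : v = i
    · subst hv; rw [hfixi]; exact ⟨le_refl _, by omega, by tauto⟩
    · have := st.2.1 v (by simp [Finset.mem_Icc]; omega) hv
      simp only [Finset.mem_Icc] at this
      exact ⟨this.1.1, this.1.2, fun _ => this.2⟩
  -- Claim 1 : q k ≤ k
  have hclaim1 : q k ≤ k := by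
    by_contra hqk
    push_neg at hqk
    have hki : k ≠ i := by
      intro h; rw [h, hfixi] at hqk; omega
    -- the set [k, j] is closed under q
    have hclosed : ∀ u, k ≤ u → u ≤ j → k ≤ q u ∧ q u ≤ j := by
      intro u h1 h2
      rcases eq_or_lt_of_le h1 with h | h
      · rw [← h]
        exact ⟨by omega, (hpar k (by omega) (by omega)).2.1⟩
      rcases eq_or_lt_of_le h2 with h' | h'
      · rw [h']; exact ⟨le_of_eq hk, by rw [← hk]; omega⟩
      · exact ⟨le_of_lt (hnorm u h h'), (hpar u (by omega) (by omega)).2.1⟩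
    have horb : ∀ r, k ≤ q^[r] k ∧ q^[r] k ≤ j := by
      intro r
      induction r with
      | zero => simp; omega
      | succ r ihr =>
        rw [Function.iterate_succ_apply']
        exact hclosed _ ihr.1 ihr.2
    obtain ⟨M, hM⟩ := hreach k (by simp [Finset.mem_Icc]; omega)
    have := (horb M).1
    rw [hM] at this
    omega
  -- Funnel : vertices in (k, j] reach j
  have hF : ∀ m v, k < v → v ≤ j → q^[m] v = i → ∃ s, q^[s] v = j := by
    intro m
    induction m with
    | zero =>
      intro v h1 h2 h
      simp only [Function.iterate_zero, id] at h
      omega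
    | succ m ihm =>
      intro v h1 h2 h
      by_cases hvj : v = j
      · exact ⟨0, hvj⟩
      · rw [Function.iterate_succ_apply] at h
        have h3 : k < q v := hnorm v h1 (by omega)
        have h4 : q v ≤ j := (hpar v (by omega) h2).2.1
        obtain ⟨s, hs⟩ := ihm (q v) h3 h4 h
        exact ⟨s + 1, by rw [Function.iterate_succ_apply, hs]⟩
  obtain ⟨Mk, hMk⟩ := hreach k (by simp [Finset.mem_Icc]; omega)
  -- Claim 2 : orbit of k stays in [i, k]
  have hclaim2 : ∀ r, i ≤ q^[r] k ∧ q^[r] k ≤ k := by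
    intro r
    induction r with
    | zero =>
      simp only [Function.iterate_zero, id]
      exact ⟨hik, le_refl _⟩
    | succ r ihr =>
      rw [Function.iterate_succ_apply']
      set u := q^[r] k with hu
      have h1 : i ≤ q u := (hpar u ihr.1 (by omega)).1
      refine ⟨h1, ?_⟩
      by_contra hqu
      push_neg at hqu
      have h2 : q u ≤ j := (hpar u ihr.1 (by omega)).2.1
      -- q u reaches i
      obtain ⟨m1, hm1⟩ := reach_from_orbit hfixi hMk (r + 1)
      rw [Function.iterate_succ_apply', ← hu] at hm1
      obtain ⟨s, hs⟩ := hF m1 (q u) hqu h2 hm1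
      -- periodicity of k
      have hper : q^[s + 1 + (r + 1)] k = k := by
        have e1 : q^[r+1] k = q u := by rw [Function.iterate_succ_apply', ← hu]
        rw [Function.iterate_add_apply, e1, Function.iterate_succ_apply', hs, ← hk]
      have := reach_of_periodic hfixi (by omega) hper hMk
      -- k = i
      have hki : k = i := this
      have hui : u = i := by omega
      rw [hui, hfixi] at hqu
      omega
  -- the two subtrees
  set par1 : ℕ → ℕ := fun v => if q v ≤ k then q v else k with hpar1
  set par2 : ℕ → ℕ := fun v => if v = j then j else q v with hpar2
  have hp1e : ∀ u, q u ≤ k → par1 u = q u := by intro u h; simp [hpar1, h]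
  have hp1n : ∀ u, ¬ q u ≤ k → par1 u = k := by intro u h; simp [hpar1, h]
  have hp2e : ∀ u, u ≠ j → par2 u = q u := by intro u h; simp [hpar2, h]
  -- k reaches i under par1
  have hkreach1 : ∃ m, par1^[m] k = i := by
    refine reach_transfer q par1 (fun u => ∃ r, q^[r] k = u) (fun _ => False) i i
      ?_ ?_ (fun u h => h.elim) ⟨0, rfl⟩ Mk k ⟨0, rfl⟩ hMk
    · rintro u ⟨r, hr⟩ _
      exact ⟨r + 1, by rw [Function.iterate_succ_apply', hr]⟩
    · rintro u ⟨r, hr⟩ _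
      refine hp1e u ?_
      have := (hclaim2 (r + 1)).2
      rw [Function.iterate_succ_apply', hr] at this
      exact this
  have st1 : IsSinkTreeOn i k i par1 := by
    refine ⟨by rw [hp1e i (by rw [hfixi]; omega), hfixi], ?_, ?_⟩
    · intro v hv hvi
      simp only [Finset.mem_Icc] at hv ⊢
      by_cases hc : q v ≤ k
      · rw [hp1e v hc]
        have := hpar v hv.1 (by omega)
        exact ⟨⟨this.1, hc⟩, this.2.2 hvi⟩
      · rw [hp1n v hc]
        have hvk : v ≠ k := by
          intro h; rw [h] at hc; exact hc hclaim1
        exact ⟨⟨hik, le_refl _⟩, by omega⟩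
    · intro v hv
      simp only [Finset.mem_Icc] at hv
      obtain ⟨M, hM⟩ := hreach v (by simp [Finset.mem_Icc]; omega)
      refine reach_transfer q par1 (fun u => i ≤ u ∧ u ≤ k) (fun u => ¬ q u ≤ k) i i
        ?_ ?_ ?_ ⟨0, rfl⟩ M v hv hM
      · intro u hu hc
        rw [not_not] at hc
        exact ⟨(hpar u hu.1 (by omega)).1, hc⟩
      · intro u _ hc
        rw [not_not] at hc
        exact hp1e u hc
      · intro u hu
        obtain ⟨m, hm⟩ := hkreach1
        exact ⟨m + 1, by rw [Function.iterate_succ_apply, hp1n u hu, hm]⟩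
  have hw1 : sinkTreeWeight p 1 n i k i par1
      ≤ ∑ v ∈ (Finset.Icc i k).erase i, lineWeight p 1 n v (q v) := by
    apply Finset.sum_le_sum
    intro v hv
    simp only [Finset.mem_erase, Finset.mem_Icc] at hv
    by_cases hc : q v ≤ k
    · rw [hp1e v hc]
    · rw [hp1n v hc]
      push_neg at hc
      have hvk : v ≠ k := by
        intro h; rw [h] at hc; omega
      exact lineWeight_between p hp 1 n (Or.inl ⟨by omega, by omega⟩)
  have st2 : IsSinkTreeOn (k+1) j j par2 := by
    refine ⟨by simp [hpar2], ?_, ?_⟩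
    · intro v hv hvj
      simp only [Finset.mem_Icc] at hv ⊢
      rw [hp2e v hvj]
      have h1 : k < q v := hnorm v (by omega) (by omega)
      have h2 := hpar v (by omega) hv.2
      exact ⟨⟨by omega, h2.2.1⟩, h2.2.2 (by omega)⟩
    · intro v hv
      simp only [Finset.mem_Icc] at hv
      obtain ⟨M, hM⟩ := hreach v (by simp [Finset.mem_Icc]; omega)
      obtain ⟨s, hs⟩ := hF M v (by omega) hv.2 hM
      refine reach_transfer q par2 (fun u => k < u ∧ u ≤ j) (fun u => u = j) j j
        ?_ ?_ ?_ ⟨0, rfl⟩ s v ⟨by omega, hv.2⟩ hs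
      · intro u hu hc
        exact ⟨hnorm u hu.1 (by omega), (hpar u (by omega) hu.2).2.1⟩
      · intro u _ hc
        exact hp2e u hc
      · intro u hu
        exact ⟨0, hu⟩
  have hw2 : sinkTreeWeight p 1 n (k+1) j j par2
      = ∑ v ∈ (Finset.Icc (k+1) j).erase j, lineWeight p 1 n v (q v) := by
    apply Finset.sum_congr rfl
    intro v hv
    simp only [Finset.mem_erase] at hv
    rw [hp2e v hv.1]
  have hsplit : sinkTreeWeight p 1 n i j i q
      = (∑ v ∈ (Finset.Icc i k).erase i, lineWeight p 1 n v (q v))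
        + lineWeight p 1 n j k
        + ∑ v ∈ (Finset.Icc (k+1) j).erase j, lineWeight p 1 n v (q v) := by
    have := sum_splitL i k j hik hkj (fun v => lineWeight p 1 n v (q v))
    rw [sinkTreeWeight, this, ← hk]
  refine ⟨k, par1, par2, hik, hkj, st1, st2, ?_⟩
  calc sinkTreeWeight p 1 n i k i par1 + lineWeight p 1 n j k
        + sinkTreeWeight p 1 n (k+1) j j par2
      ≤ (∑ v ∈ (Finset.Icc i k).erase i, lineWeight p 1 n v (q v))
        + lineWeight p 1 n j k
        + ∑ v ∈ (Finset.Icc (k+1) j).erase j, lineWeight p 1 n v (q v) := by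
        rw [hw2]; omega
    _ = sinkTreeWeight p 1 n i j i q := hsplit.symm
    _ ≤ sinkTreeWeight p 1 n i j i par := hwq

lemma combineL (n : ℕ) (p : ℕ → ℝ) {i k j : ℕ} (hik : i ≤ k) (hkj : k < j)
    (par1 par2 : ℕ → ℕ) (st1 : IsSinkTreeOn i k i par1)
    (st2 : IsSinkTreeOn (k+1) j j par2) :
    ∃ par, IsSinkTreeOn i j i par ∧
      sinkTreeWeight p 1 n i j i par =
        sinkTreeWeight p 1 n i k i par1 + lineWeight p 1 n j k +
        sinkTreeWeight p 1 n (k+1) j j par2 := by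
  set q : ℕ → ℕ := fun v => if v ≤ k then par1 v else if v = j then k else par2 v with hq
  have hq1 : ∀ v, v ≤ k → q v = par1 v := by intro v h; simp [hq, h]
  have hqj : q j = k := by simp [hq, show ¬ j ≤ k by omega]
  have hq2 : ∀ v, ¬ v ≤ k → v ≠ j → q v = par2 v := by
    intro v h1 h2; simp [hq, h1, h2]
  have hfix1 : par1 i = i := st1.1
  have hfix2 : par2 j = j := st2.1
  -- vertices in [i,k] reach i under q
  have hreachL : ∀ v, i ≤ v → v ≤ k → ∃ m, q^[m] v = i := by
    intro v h1 h2
    obtain ⟨M, hM⟩ := st1.2.2 v (by simp [Finset.mem_Icc]; omega)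
    refine reach_transfer par1 q (fun u => i ≤ u ∧ u ≤ k) (fun _ => False) i i
      ?_ ?_ (fun u h => h.elim) ⟨0, rfl⟩ M v ⟨h1, h2⟩ hM
    · intro u hu _
      by_cases h : u = i
      · subst h; rw [hfix1]; exact hu
      · have := st1.2.1 u (by simp [Finset.mem_Icc]; omega) h
        simpa [Finset.mem_Icc] using this.1
    · intro u hu _
      exact hq1 u hu.2
  have hreachj : ∃ m, q^[m] j = i := by
    obtain ⟨m, hm⟩ := hreachL k hik (le_refl _)
    exact ⟨m + 1, by rw [Function.iterate_succ_apply, hqj, hm]⟩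
  have hst : IsSinkTreeOn i j i q := by
    refine ⟨by rw [hq1 i hik, hfix1], ?_, ?_⟩
    · intro v hv hvi
      simp only [Finset.mem_Icc] at hv ⊢
      by_cases h1 : v ≤ k
      · rw [hq1 v h1]
        have := st1.2.1 v (by simp [Finset.mem_Icc]; omega) hvi
        simp only [Finset.mem_Icc] at this
        exact ⟨⟨this.1.1, by omega⟩, this.2⟩
      by_cases h2 : v = j
      · subst h2; rw [hqj]; exact ⟨⟨hik, by omega⟩, by omega⟩
      · rw [hq2 v h1 h2]
        have := st2.2.1 v (by simp [Finset.mem_Icc]; omega) h2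
        simp only [Finset.mem_Icc] at this
        exact ⟨⟨by omega, this.1.2⟩, this.2⟩
    · intro v hv
      simp only [Finset.mem_Icc] at hv
      by_cases h1 : v ≤ k
      · exact hreachL v hv.1 h1
      · obtain ⟨M, hM⟩ := st2.2.2 v (by simp [Finset.mem_Icc]; omega)
        refine reach_transfer par2 q (fun u => k + 1 ≤ u ∧ u ≤ j) (fun u => u = j) j i
          ?_ ?_ ?_ hreachj M v ⟨by omega, hv.2⟩ hM
        · intro u hu h2
          have := st2.2.1 u (by simp [Finset.mem_Icc]; omega) h2
          simpa [Finset.mem_Icc] using this.1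
        · intro u hu h2
          exact hq2 u (by omega) h2
        · intro u hu
          subst hu; exact hreachj
  refine ⟨q, hst, ?_⟩
  have hsplit := sum_splitL i k j hik hkj (fun v => lineWeight p 1 n v (q v))
  rw [sinkTreeWeight, hsplit]
  have e1 : ∑ v ∈ (Finset.Icc i k).erase i, lineWeight p 1 n v (q v)
      = sinkTreeWeight p 1 n i k i par1 := by
    apply Finset.sum_congr rfl
    intro v hv
    simp only [Finset.mem_erase, Finset.mem_Icc] at hv
    rw [hq1 v hv.2.2]
  have e2 : ∑ v ∈ (Finset.Icc (k+1) j).erase j, lineWeight p 1 n v (q v)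
      = sinkTreeWeight p 1 n (k+1) j j par2 := by
    apply Finset.sum_congr rfl
    intro v hv
    simp only [Finset.mem_erase, Finset.mem_Icc] at hv
    rw [hq2 v (by omega) hv.1]
  rw [e1, e2, hqj]

lemma exchangeR (n : ℕ) (p : ℕ → ℝ) (hp : StrictMono p) :
    ∀ t {i j : ℕ} (par : ℕ → ℕ), i < j → IsSinkTreeOn i j j par → par i ≤ i + t →
    ∃ q, IsSinkTreeOn i j j q ∧
      sinkTreeWeight p 1 n i j j q ≤ sinkTreeWeight p 1 n i j j par ∧
      ∀ w, i < w → w < q i → q w < q i := by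
  intro t
  induction t with
  | zero =>
    intro i j par hij st hle
    exfalso
    have hi := st.2.1 i (by simp [Finset.mem_Icc]; omega) (by omega)
    simp only [Finset.mem_Icc] at hi
    omega
  | succ t ih =>
    intro i j par hij st hle
    have himem : i ∈ Finset.Icc i j := by simp [Finset.mem_Icc]; omega
    have hi := st.2.1 i himem (by omega)
    simp only [Finset.mem_Icc] at hi
    set k := par i with hk
    have hkj : k ≤ j := hi.1.2
    have hik : i < k := by omega
    by_cases hb : ∀ w, i < w → w < k → par w < k
    · exact ⟨par, st, le_refl _, hb⟩
    push_neg at hb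
    obtain ⟨w, hiw, hwk, hwge⟩ := hb
    have hwmem : w ∈ Finset.Icc i j := by simp [Finset.mem_Icc]; omega
    have hwj : w ≠ j := by omega
    have hfixj : par j = j := st.1
    have hreach := st.2.2
    obtain ⟨Mi, hMi⟩ := hreach i himem
    have hino : ∀ r, par^[r+1] i ≠ i := no_period hfixj (by omega) hMi
    have hkno : ∀ r, par^[r] k ≠ i := by
      intro r h
      exact hino r (by rw [Function.iterate_succ_apply, ← hk, h])
    obtain ⟨Mk, hMk⟩ := reach_from_orbit hfixj hMi 1
    rw [Function.iterate_one, ← hk] at hMk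
    by_cases hA : ∃ s, par^[s] k = w
    · -- Case A : reroute i to w
      set q : ℕ → ℕ := fun v => if v = i then w else par v with hq
      have hqi : q i = w := by simp [hq]
      have hqe : ∀ u, u ≠ i → q u = par u := by
        intro u hu; simp [hq, hu]
      obtain ⟨s, hs⟩ := hA
      have hwno : ∀ r, par^[r] w ≠ i := by
        intro r h
        apply hkno (r + s)
        rw [Function.iterate_add_apply, hs, h]
      obtain ⟨Mw, hMw⟩ := reach_from_orbit hfixj hMk s
      rw [hs] at hMw
      have hwreach : ∃ m, q^[m] w = j := by
        refine reach_transfer par q (fun u => ∃ r, par^[r] w = u) (fun _ => False) j j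
          ?_ ?_ (fun u h => h.elim) ⟨0, rfl⟩ Mw w ⟨0, rfl⟩ hMw
        · rintro u ⟨r, hr⟩ _
          exact ⟨r + 1, by rw [Function.iterate_succ_apply', hr]⟩
        · rintro u ⟨r, hr⟩ _
          exact hqe u (by rw [← hr]; exact hwno r)
      have hqreach : ∀ v ∈ Finset.Icc i j, ∃ m, q^[m] v = j := by
        intro v hv
        obtain ⟨M, hM⟩ := hreach v hv
        refine reach_transfer par q (fun _ => True) (fun u => u = i) j j
          (fun _ _ _ => trivial) (fun u _ hu => hqe u hu) ?_ ⟨0, rfl⟩ M v trivial hM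
        intro u hu
        subst hu
        obtain ⟨m, hm⟩ := hwreach
        exact ⟨m + 1, by rw [Function.iterate_succ_apply, hqi, hm]⟩
      have hst : IsSinkTreeOn i j j q := by
        refine ⟨by rw [hqe j (by omega), hfixj], ?_, hqreach⟩
        intro v hv hvj
        by_cases hvi : v = i
        · subst hvi
          rw [hqi]
          exact ⟨hwmem, by omega⟩
        · rw [hqe v hvi]; exact st.2.1 v hv hvj
      have hwt : sinkTreeWeight p 1 n i j j q ≤ sinkTreeWeight p 1 n i j j par := by
        apply Finset.sum_le_sum
        intro v hv
        by_cases hvi : v = i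
        · subst hvi
          rw [hqi]
          exact lineWeight_between p hp 1 n (Or.inl ⟨by omega, by omega⟩)
        · rw [hqe v hvi]
      obtain ⟨q', hst', hwt', hnorm'⟩ := ih q hij hst (by rw [hqi]; omega)
      exact ⟨q', hst', hwt'.trans hwt, hnorm'⟩
    · -- Case B : reroute i to w and w to k
      push_neg at hA
      set q : ℕ → ℕ := fun v => if v = i then w else if v = w then k else par v with hq
      have hqi : q i = w := by simp [hq]
      have hqw : q w = k := by simp [hq, show w ≠ i by omega]
      have hqe : ∀ u, u ≠ i → u ≠ w → q u = par u := by
        intro u h1 h2; simp [hq, h1, h2]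
      have hkreach : ∃ m, q^[m] k = j := by
        refine reach_transfer par q (fun u => ∃ r, par^[r] k = u) (fun _ => False) j j
          ?_ ?_ (fun u h => h.elim) ⟨0, rfl⟩ Mk k ⟨0, rfl⟩ hMk
        · rintro u ⟨r, hr⟩ _
          exact ⟨r + 1, by rw [Function.iterate_succ_apply', hr]⟩
        · rintro u ⟨r, hr⟩ _
          exact hqe u (by rw [← hr]; exact hkno r) (by rw [← hr]; exact hA r)
      have hwreach : ∃ m, q^[m] w = j := by
        obtain ⟨m, hm⟩ := hkreach
        exact ⟨m + 1, by rw [Function.iterate_succ_apply, hqw, hm]⟩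
      have hqreach : ∀ v ∈ Finset.Icc i j, ∃ m, q^[m] v = j := by
        intro v hv
        obtain ⟨M, hM⟩ := hreach v hv
        refine reach_transfer par q (fun _ => True) (fun u => u = i ∨ u = w) j j
          (fun _ _ _ => trivial) (fun u _ hu => hqe u (by tauto) (by tauto)) ?_
          ⟨0, rfl⟩ M v trivial hM
        rintro u (hu | hu) <;> subst hu
        · obtain ⟨m, hm⟩ := hwreach
          exact ⟨m + 1, by rw [Function.iterate_succ_apply, hqi, hm]⟩
        · exact hwreach
      have hst : IsSinkTreeOn i j j q := by
        refine ⟨by rw [hqe j (by omega) (by omega), hfixj], ?_, hqreach⟩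
        intro v hv hvj
        by_cases hvi : v = i
        · subst hvi; rw [hqi]; exact ⟨hwmem, by omega⟩
        by_cases hvw : v = w
        · subst hvw
          rw [hqw]
          exact ⟨by simp [Finset.mem_Icc]; omega, by omega⟩
        · rw [hqe v hvi hvw]; exact st.2.1 v hv hvj
      have hwt : sinkTreeWeight p 1 n i j j q ≤ sinkTreeWeight p 1 n i j j par := by
        apply Finset.sum_le_sum
        intro v hv
        by_cases hvi : v = i
        · subst hvi
          rw [hqi]
          exact lineWeight_between p hp 1 n (Or.inl ⟨by omega, by omega⟩)
        by_cases hvw : v = w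
        · subst hvw
          rw [hqw]
          exact lineWeight_between p hp 1 n (Or.inl ⟨by omega, hwge⟩)
        · rw [hqe v hvi hvw]
      obtain ⟨q', hst', hwt', hnorm'⟩ := ih q hij hst (by rw [hqi]; omega)
      exact ⟨q', hst', hwt'.trans hwt, hnorm'⟩

lemma sum_splitR (i c j : ℕ) (hic : i < c) (hcj : c ≤ j) (F : ℕ → ℕ) :
    ∑ v ∈ (Finset.Icc i j).erase j, F v
      = (∑ v ∈ (Finset.Icc i (c-1)).erase i, F v) + F i
        + ∑ v ∈ (Finset.Icc c j).erase j, F v := by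
  have h1 : (Finset.Icc i j).erase j
      = (insert i ((Finset.Icc i (c-1)).erase i)) ∪ ((Finset.Icc c j).erase j) := by
    ext v
    simp only [Finset.mem_erase, Finset.mem_Icc, Finset.mem_union, Finset.mem_insert]
    omega
  have hd : Disjoint (insert i ((Finset.Icc i (c-1)).erase i)) ((Finset.Icc c j).erase j) := by
    rw [Finset.disjoint_left]
    intro v hv hv2
    simp only [Finset.mem_erase, Finset.mem_Icc, Finset.mem_insert] at hv hv2
    omega
  have hi : i ∉ (Finset.Icc i (c-1)).erase i := by simp
  rw [h1, Finset.sum_union hd, Finset.sum_insert hi]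
  omega

lemma decomposeR (n : ℕ) (p : ℕ → ℝ) (hp : StrictMono p) {i j : ℕ} (hij : i < j)
    (par : ℕ → ℕ) (st0 : IsSinkTreeOn i j j par) :
    ∃ k par1 par2, i < k ∧ k ≤ j ∧ IsSinkTreeOn i (k-1) i par1 ∧
      IsSinkTreeOn k j j par2 ∧
      sinkTreeWeight p 1 n i (k-1) i par1 + lineWeight p 1 n i k
        + sinkTreeWeight p 1 n k j j par2 ≤ sinkTreeWeight p 1 n i j j par := by
  obtain ⟨q, st, hwq, hnorm⟩ := exchangeR n p hp j par hij st0 (by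
    have hi := st0.2.1 i (by simp [Finset.mem_Icc]; omega) (by omega)
    simp only [Finset.mem_Icc] at hi; omega)
  have himem : i ∈ Finset.Icc i j := by simp [Finset.mem_Icc]; omega
  have hi := st.2.1 i himem (by omega)
  simp only [Finset.mem_Icc] at hi
  set c := q i with hc
  have hcj : c ≤ j := hi.1.2
  have hic : i < c := by omega
  have hfixj : q j = j := st.1
  have hreach := st.2.2
  have hpar : ∀ v, i ≤ v → v ≤ j → i ≤ q v ∧ q v ≤ j ∧ (v ≠ j → q v ≠ v) := by
    intro v h1 h2
    by_cases hv : v = j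
    · subst hv; rw [hfixj]; exact ⟨by omega, le_refl _, by tauto⟩
    · have := st.2.1 v (by simp [Finset.mem_Icc]; omega) hv
      simp only [Finset.mem_Icc] at this
      exact ⟨this.1.1, this.1.2, fun _ => this.2⟩
  -- Claim 1 : c ≤ q c
  have hclaim1 : c ≤ q c := by
    by_contra hqc
    push_neg at hqc
    have hcj' : c < j := by
      rcases eq_or_lt_of_le hcj with h | h
      · rw [h, hfixj] at hqc; omega
      · exact h
    have hclosed : ∀ u, i ≤ u → u ≤ c → i ≤ q u ∧ q u ≤ c := by
      intro u h1 h2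
      rcases eq_or_lt_of_le h2 with h | h
      · rw [h]
        exact ⟨(hpar c (by omega) (by omega)).1, by omega⟩
      rcases eq_or_lt_of_le h1 with h' | h'
      · rw [← h']; exact ⟨by rw [← hc]; omega, by rw [← hc]⟩
      · exact ⟨(hpar u (by omega) (by omega)).1, le_of_lt (hnorm u h' h)⟩
    have horb : ∀ r, i ≤ q^[r] c ∧ q^[r] c ≤ c := by
      intro r
      induction r with
      | zero =>
        simp only [Function.iterate_zero, id]
        exact ⟨by omega, le_refl _⟩
      | succ r ihr =>
        rw [Function.iterate_succ_apply']
        exact hclosed _ ihr.1 ihr.2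
    obtain ⟨M, hM⟩ := hreach c (by simp [Finset.mem_Icc]; omega)
    have := (horb M).2
    rw [hM] at this
    omega
  -- Funnel : vertices in [i, c) reach i
  have hF : ∀ m v, i ≤ v → v < c → q^[m] v = j → ∃ s, q^[s] v = i := by
    intro m
    induction m with
    | zero =>
      intro v h1 h2 h
      simp only [Function.iterate_zero, id] at h
      omega
    | succ m ihm =>
      intro v h1 h2 h
      by_cases hvi : v = i
      · exact ⟨0, hvi⟩
      · rw [Function.iterate_succ_apply] at h
        have h3 : q v < c := hnorm v (by omega) h2
        have h4 : i ≤ q v := (hpar v h1 (by omega)).1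
        obtain ⟨s, hs⟩ := ihm (q v) h4 h3 h
        exact ⟨s + 1, by rw [Function.iterate_succ_apply, hs]⟩
  obtain ⟨Mc, hMc⟩ := hreach c (by simp [Finset.mem_Icc]; omega)
  -- Claim 2 : orbit of c stays in [c, j]
  have hclaim2 : ∀ r, c ≤ q^[r] c ∧ q^[r] c ≤ j := by
    intro r
    induction r with
    | zero =>
      simp only [Function.iterate_zero, id]
      exact ⟨le_refl _, hcj⟩
    | succ r ihr =>
      rw [Function.iterate_succ_apply']
      set u := q^[r] c with hu
      have h2 : q u ≤ j := (hpar u (by omega) ihr.2).2.1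
      refine ⟨?_, h2⟩
      by_contra hqu
      push_neg at hqu
      have h1 : i ≤ q u := (hpar u (by omega) ihr.2).1
      obtain ⟨m1, hm1⟩ := reach_from_orbit hfixj hMc (r + 1)
      rw [Function.iterate_succ_apply', ← hu] at hm1
      obtain ⟨s, hs⟩ := hF m1 (q u) h1 hqu hm1
      have hper : q^[s + 1 + (r + 1)] c = c := by
        have e1 : q^[r+1] c = q u := by rw [Function.iterate_succ_apply', ← hu]
        rw [Function.iterate_add_apply, e1, Function.iterate_succ_apply', hs, ← hc]
      have hcjeq := reach_of_periodic hfixj (by omega) hper hMc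
      have huj : u = j := by omega
      rw [huj, hfixj] at hqu
      omega
  -- the two subtrees
  set par1 : ℕ → ℕ := fun v => if v = i then i else q v with hpar1
  set par2 : ℕ → ℕ := fun v => if c ≤ q v then q v else c with hpar2
  have hp1e : ∀ u, u ≠ i → par1 u = q u := by intro u h; simp [hpar1, h]
  have hp2e : ∀ u, c ≤ q u → par2 u = q u := by intro u h; simp [hpar2, h]
  have hp2n : ∀ u, ¬ c ≤ q u → par2 u = c := by intro u h; simp [hpar2, h]
  -- c reaches j under par2
  have hcreach2 : ∃ m, par2^[m] c = j := by
    refine reach_transfer q par2 (fun u => ∃ r, q^[r] c = u) (fun _ => False) j j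
      ?_ ?_ (fun u h => h.elim) ⟨0, rfl⟩ Mc c ⟨0, rfl⟩ hMc
    · rintro u ⟨r, hr⟩ _
      exact ⟨r + 1, by rw [Function.iterate_succ_apply', hr]⟩
    · rintro u ⟨r, hr⟩ _
      refine hp2e u ?_
      have := (hclaim2 (r + 1)).1
      rw [Function.iterate_succ_apply', hr] at this
      exact this
  have st2 : IsSinkTreeOn c j j par2 := by
    refine ⟨by rw [hp2e j (by rw [hfixj]; omega), hfixj], ?_, ?_⟩
    · intro v hv hvj
      simp only [Finset.mem_Icc] at hv ⊢
      by_cases hcc : c ≤ q v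
      · rw [hp2e v hcc]
        have := hpar v (by omega) hv.2
        exact ⟨⟨hcc, this.2.1⟩, this.2.2 hvj⟩
      · rw [hp2n v hcc]
        have hvc : v ≠ c := by
          intro h; rw [h] at hcc; exact hcc hclaim1
        exact ⟨⟨le_refl _, hcj⟩, by omega⟩
    · intro v hv
      simp only [Finset.mem_Icc] at hv
      obtain ⟨M, hM⟩ := hreach v (by simp [Finset.mem_Icc]; omega)
      refine reach_transfer q par2 (fun u => c ≤ u ∧ u ≤ j) (fun u => ¬ c ≤ q u) j j
        ?_ ?_ ?_ ⟨0, rfl⟩ M v hv hM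
      · intro u hu hcc
        rw [not_not] at hcc
        exact ⟨hcc, (hpar u (by omega) hu.2).2.1⟩
      · intro u _ hcc
        rw [not_not] at hcc
        exact hp2e u hcc
      · intro u hu
        obtain ⟨m, hm⟩ := hcreach2
        exact ⟨m + 1, by rw [Function.iterate_succ_apply, hp2n u hu, hm]⟩
  have hw2 : sinkTreeWeight p 1 n c j j par2
      ≤ ∑ v ∈ (Finset.Icc c j).erase j, lineWeight p 1 n v (q v) := by
    apply Finset.sum_le_sum
    intro v hv
    simp only [Finset.mem_erase, Finset.mem_Icc] at hv
    by_cases hcc : c ≤ q v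
    · rw [hp2e v hcc]
    · rw [hp2n v hcc]
      push_neg at hcc
      exact lineWeight_between p hp 1 n (Or.inr ⟨by omega, hv.2.1⟩)
  have st1 : IsSinkTreeOn i (c-1) i par1 := by
    refine ⟨by simp [hpar1], ?_, ?_⟩
    · intro v hv hvi
      simp only [Finset.mem_Icc] at hv ⊢
      rw [hp1e v hvi]
      have h1 : q v < c := hnorm v (by omega) (by omega)
      have h2 := hpar v hv.1 (by omega)
      exact ⟨⟨h2.1, by omega⟩, h2.2.2 (by omega)⟩
    · intro v hv
      simp only [Finset.mem_Icc] at hv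
      obtain ⟨M, hM⟩ := hreach v (by simp [Finset.mem_Icc]; omega)
      obtain ⟨s, hs⟩ := hF M v hv.1 (by omega) hM
      refine reach_transfer q par1 (fun u => i ≤ u ∧ u < c) (fun u => u = i) i i
        ?_ ?_ ?_ ⟨0, rfl⟩ s v ⟨hv.1, by omega⟩ hs
      · intro u hu hui
        exact ⟨(hpar u hu.1 (by omega)).1, hnorm u (by omega) hu.2⟩
      · intro u _ hui
        exact hp1e u hui
      · intro u hu
        exact ⟨0, hu⟩
  have hw1 : sinkTreeWeight p 1 n i (c-1) i par1
      = ∑ v ∈ (Finset.Icc i (c-1)).erase i, lineWeight p 1 n v (q v) := by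
    apply Finset.sum_congr rfl
    intro v hv
    simp only [Finset.mem_erase] at hv
    rw [hp1e v hv.1]
  have hsplit : sinkTreeWeight p 1 n i j j q
      = (∑ v ∈ (Finset.Icc i (c-1)).erase i, lineWeight p 1 n v (q v))
        + lineWeight p 1 n i c
        + ∑ v ∈ (Finset.Icc c j).erase j, lineWeight p 1 n v (q v) := by
    have := sum_splitR i c j hic hcj (fun v => lineWeight p 1 n v (q v))
    rw [sinkTreeWeight, this, ← hc]
  refine ⟨c, par1, par2, hic, hcj, st1, st2, ?_⟩
  calc sinkTreeWeight p 1 n i (c-1) i par1 + lineWeight p 1 n i c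
        + sinkTreeWeight p 1 n c j j par2
      ≤ (∑ v ∈ (Finset.Icc i (c-1)).erase i, lineWeight p 1 n v (q v))
        + lineWeight p 1 n i c
        + ∑ v ∈ (Finset.Icc c j).erase j, lineWeight p 1 n v (q v) := by
        rw [hw1]; omega
    _ = sinkTreeWeight p 1 n i j j q := hsplit.symm
    _ ≤ sinkTreeWeight p 1 n i j j par := hwq

lemma combineR (n : ℕ) (p : ℕ → ℝ) {i k j : ℕ} (hik : i < k) (hkj : k ≤ j)
    (par1 par2 : ℕ → ℕ) (st1 : IsSinkTreeOn i (k-1) i par1)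
    (st2 : IsSinkTreeOn k j j par2) :
    ∃ par, IsSinkTreeOn i j j par ∧
      sinkTreeWeight p 1 n i j j par =
        sinkTreeWeight p 1 n i (k-1) i par1 + lineWeight p 1 n i k +
        sinkTreeWeight p 1 n k j j par2 := by
  set q : ℕ → ℕ := fun v => if v < k then (if v = i then k else par1 v) else par2 v with hq
  have hqi : q i = k := by simp [hq, hik]
  have hq1 : ∀ v, v < k → v ≠ i → q v = par1 v := by
    intro v h1 h2; simp [hq, h1, h2]
  have hq2 : ∀ v, ¬ v < k → q v = par2 v := by
    intro v h; simp [hq, h]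
  have hfix1 : par1 i = i := st1.1
  have hfix2 : par2 j = j := st2.1
  have hreachR : ∀ v, k ≤ v → v ≤ j → ∃ m, q^[m] v = j := by
    intro v h1 h2
    obtain ⟨M, hM⟩ := st2.2.2 v (by simp [Finset.mem_Icc]; omega)
    refine reach_transfer par2 q (fun u => k ≤ u ∧ u ≤ j) (fun _ => False) j j
      ?_ ?_ (fun u h => h.elim) ⟨0, rfl⟩ M v ⟨h1, h2⟩ hM
    · intro u hu _
      by_cases h : u = j
      · subst h; rw [hfix2]; exact hu
      · have := st2.2.1 u (by simp [Finset.mem_Icc]; omega) h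
        simpa [Finset.mem_Icc] using this.1
    · intro u hu _
      exact hq2 u (by omega)
  have hreachi : ∃ m, q^[m] i = j := by
    obtain ⟨m, hm⟩ := hreachR k (le_refl _) hkj
    exact ⟨m + 1, by rw [Function.iterate_succ_apply, hqi, hm]⟩
  have hst : IsSinkTreeOn i j j q := by
    refine ⟨by rw [hq2 j (by omega), hfix2], ?_, ?_⟩
    · intro v hv hvj
      simp only [Finset.mem_Icc] at hv ⊢
      by_cases h1 : v < k
      · by_cases h2 : v = i
        · subst h2; rw [hqi]; exact ⟨⟨by omega, hkj⟩, by omega⟩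
        · rw [hq1 v h1 h2]
          have := st1.2.1 v (by simp [Finset.mem_Icc]; omega) h2
          simp only [Finset.mem_Icc] at this
          exact ⟨⟨this.1.1, by omega⟩, this.2⟩
      · rw [hq2 v h1]
        have := st2.2.1 v (by simp [Finset.mem_Icc]; omega) hvj
        simp only [Finset.mem_Icc] at this
        exact ⟨⟨by omega, this.1.2⟩, this.2⟩
    · intro v hv
      simp only [Finset.mem_Icc] at hv
      by_cases h1 : v < k
      · obtain ⟨M, hM⟩ := st1.2.2 v (by simp [Finset.mem_Icc]; omega)
        refine reach_transfer par1 q (fun u => i ≤ u ∧ u ≤ k - 1) (fun u => u = i) i j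
          ?_ ?_ ?_ hreachi M v ⟨hv.1, by omega⟩ hM
        · intro u hu h2
          have := st1.2.1 u (by simp [Finset.mem_Icc]; omega) h2
          simpa [Finset.mem_Icc] using this.1
        · intro u hu h2
          exact hq1 u (by omega) h2
        · intro u hu
          subst hu; exact hreachi
      · exact hreachR v (by omega) hv.2
  refine ⟨q, hst, ?_⟩
  have hsplit := sum_splitR i k j hik hkj (fun v => lineWeight p 1 n v (q v))
  rw [sinkTreeWeight, hsplit]
  have e1 : ∑ v ∈ (Finset.Icc i (k-1)).erase i, lineWeight p 1 n v (q v)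
      = sinkTreeWeight p 1 n i (k-1) i par1 := by
    apply Finset.sum_congr rfl
    intro v hv
    simp only [Finset.mem_erase, Finset.mem_Icc] at hv
    rw [hq1 v (by omega) hv.1]
  have e2 : ∑ v ∈ (Finset.Icc k j).erase j, lineWeight p 1 n v (q v)
      = sinkTreeWeight p 1 n k j j par2 := by
    apply Finset.sum_congr rfl
    intro v hv
    simp only [Finset.mem_erase, Finset.mem_Icc] at hv
    rw [hq2 v (by omega)]
  rw [e1, e2, hqi]

lemma main_dp (n : ℕ) (p : ℕ → ℝ) (hp : StrictMono p)
    (Sl Sr : ℕ → ℕ → ℕ)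
    (hSl0 : ∀ i, Sl i i = 0) (hSr0 : ∀ i, Sr i i = 0)
    (hSl : ∀ i j : ℕ, (hij : i < j) → Sl i j
      = (Finset.Ico i j).inf' (Finset.nonempty_Ico.mpr hij)
          (fun k => Sl i k + lineWeight p 1 n j k + Sr (k + 1) j))
    (hSr : ∀ i j : ℕ, (hij : i < j) → Sr i j
      = (Finset.Ioc i j).inf' (Finset.nonempty_Ioc.mpr hij)
          (fun k => Sl i (k - 1) + lineWeight p 1 n i k + Sr k j)) :
    ∀ d i j, i ≤ j → j - i = d →
      ((∃ par, IsSinkTreeOn i j i par ∧ sinkTreeWeight p 1 n i j i par = Sl i j) ∧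
       (∃ par, IsSinkTreeOn i j j par ∧ sinkTreeWeight p 1 n i j j par = Sr i j) ∧
       (∀ par, IsSinkTreeOn i j i par → Sl i j ≤ sinkTreeWeight p 1 n i j i par) ∧
       (∀ par, IsSinkTreeOn i j j par → Sr i j ≤ sinkTreeWeight p 1 n i j j par)) := by
  intro d
  induction d using Nat.strong_induction_on with
  | _ d IH =>
    intro i j hij hd
    rcases eq_or_lt_of_le hij with heq | hlt
    · -- base case i = j
      subst heq
      have hid : IsSinkTreeOn i i i id := by
        refine ⟨rfl, ?_, ?_⟩
        · intro k hk hki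
          simp only [Finset.mem_Icc] at hk
          omega
        · intro k hk
          simp only [Finset.mem_Icc] at hk
          exact ⟨0, by simp; omega⟩
      have hwt : sinkTreeWeight p 1 n i i i id = 0 := by
        rw [sinkTreeWeight, Finset.Icc_self, Finset.erase_singleton, Finset.sum_empty]
      have hwt0 : ∀ x (par : ℕ → ℕ), sinkTreeWeight p 1 n i i x par = sinkTreeWeight p 1 n i i x par := fun _ _ => rfl
      refine ⟨⟨id, hid, by rw [hwt, hSl0]⟩, ⟨id, hid, by rw [hwt, hSr0]⟩,
        fun par _ => by rw [hSl0]; omega, fun par _ => by rw [hSr0]; omega⟩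
    · -- inductive case i < j
      refine ⟨?_, ?_, ?_, ?_⟩
      · -- existence for Sl
        obtain ⟨k, hk, hkeq⟩ := Finset.exists_mem_eq_inf'
          (Finset.nonempty_Ico.mpr hlt)
          (fun k => Sl i k + lineWeight p 1 n j k + Sr (k + 1) j)
        simp only [Finset.mem_Ico] at hk
        obtain ⟨par1, st1, hw1⟩ :=
          (IH (k - i) (by omega) i k (by omega) rfl).1
        obtain ⟨par2, st2, hw2⟩ :=
          (IH (j - (k+1)) (by omega) (k+1) j (by omega) rfl).2.1
        obtain ⟨par, st, hw⟩ := combineL n p hk.1 hk.2 par1 par2 st1 st2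
        exact ⟨par, st, by rw [hw, hw1, hw2, hSl i j hlt, hkeq]⟩
      · -- existence for Sr
        obtain ⟨k, hk, hkeq⟩ := Finset.exists_mem_eq_inf'
          (Finset.nonempty_Ioc.mpr hlt)
          (fun k => Sl i (k - 1) + lineWeight p 1 n i k + Sr k j)
        simp only [Finset.mem_Ioc] at hk
        obtain ⟨par1, st1, hw1⟩ :=
          (IH ((k-1) - i) (by omega) i (k-1) (by omega) rfl).1
        obtain ⟨par2, st2, hw2⟩ :=
          (IH (j - k) (by omega) k j (by omega) rfl).2.1
        obtain ⟨par, st, hw⟩ := combineR n p hk.1 hk.2 par1 par2 st1 st2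
        exact ⟨par, st, by rw [hw, hw1, hw2, hSr i j hlt, hkeq]⟩
      · -- lower bound for Sl
        intro par st
        obtain ⟨k, par1, par2, hik, hkj, st1, st2, hle⟩ := decomposeL n p hp hlt par st
        have h1 := (IH (k - i) (by omega) i k hik rfl).2.2.1 par1 st1
        have h2 := (IH (j - (k+1)) (by omega) (k+1) j (by omega) rfl).2.2.2 par2 st2
        have h3 : Sl i j ≤ Sl i k + lineWeight p 1 n j k + Sr (k+1) j := by
          rw [hSl i j hlt]
          exact Finset.inf'_le _ (by simp [Finset.mem_Ico]; omega)
        omega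
      · -- lower bound for Sr
        intro par st
        obtain ⟨k, par1, par2, hik, hkj, st1, st2, hle⟩ := decomposeR n p hp hlt par st
        have h1 := (IH ((k-1) - i) (by omega) i (k-1) (by omega) rfl).2.2.1 par1 st1
        have h2 := (IH (j - k) (by omega) k j hkj rfl).2.2.2 par2 st2
        have h3 : Sr i j ≤ Sl i (k-1) + lineWeight p 1 n i k + Sr k j := by
          rw [hSr i j hlt]
          exact Finset.inf'_le _ (by simp [Finset.mem_Ioc]; omega)
        omega

/-- soundness of the sink-tree dynamic program. If `Sl`/`Sr` satisfy the
recurrences of Algorithm 1 (with all weights computed over the full point set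
`P = P_{[1,n]}`), then `Sl i j ≤ OPT^i_{[i,j]}` and `Sr i j ≤ OPT^j_{[i,j]}`, and each
value is achieved as the weight of an actual sink tree on `P_{[i,j]}` rooted at `p_i`
(resp. `p_j`). -/
theorem dp_sound (n : ℕ) (p : ℕ → ℝ) (hp : StrictMono p)
    (Sl Sr : ℕ → ℕ → ℕ)
    (hSl0 : ∀ i, Sl i i = 0) (hSr0 : ∀ i, Sr i i = 0)
    (hSl : ∀ i j : ℕ, (hij : i < j) → Sl i j
      = (Finset.Ico i j).inf' (Finset.nonempty_Ico.mpr hij)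
          (fun k => Sl i k + lineWeight p 1 n j k + Sr (k + 1) j))
    (hSr : ∀ i j : ℕ, (hij : i < j) → Sr i j
      = (Finset.Ioc i j).inf' (Finset.nonempty_Ioc.mpr hij)
          (fun k => Sl i (k - 1) + lineWeight p 1 n i k + Sr k j))
    (i j : ℕ) (h1i : 1 ≤ i) (hij : i ≤ j) (hjn : j ≤ n) :
    Sl i j ≤ OPTsink p 1 n i j i ∧ Sr i j ≤ OPTsink p 1 n i j j ∧
    (∃ par : ℕ → ℕ, IsSinkTreeOn i j i par ∧ sinkTreeWeight p 1 n i j i par = Sl i j) ∧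
    (∃ par : ℕ → ℕ, IsSinkTreeOn i j j par ∧ sinkTreeWeight p 1 n i j j par = Sr i j) := by
  obtain ⟨hexL, hexR, hlbL, hlbR⟩ :=
    main_dp n p hp Sl Sr hSl0 hSr0 hSl hSr (j - i) i j hij rfl
  refine ⟨?_, ?_, hexL, hexR⟩
  · apply le_csInf
    · obtain ⟨par, st, hw⟩ := hexL
      exact ⟨sinkTreeWeight p 1 n i j i par, par, st, rfl⟩
    · rintro W ⟨par, st, rfl⟩
      exact hlbL par st
  · apply le_csInf
    · obtain ⟨par, st, hw⟩ := hexR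
      exact ⟨sinkTreeWeight p 1 n i j j par, par, st, rfl⟩
    · rintro W ⟨par, st, rfl⟩
      exact hlbR par st
end
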